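/- Let μ ≥ 2 and D ≥ 2μ be reals, and define (t_j)_{j≥1} by t_1 = 0 and t_{j+1} = t_j + (D − t_j)/μ. Then t_{j+1} − t_j = (D/μ)·(1 − 1/μ)^{j−1} for every j ≥ 1, the gaps t_{j+1} − t_j are strictly decreasing in j, and the largest index j* ≥ 2 with t_{j*} − t_{j*−1} ≥ 1 exists and satisfies 1 + (μ−1)·ln(D/μ) ≤ j* ≤ 2 + μ·ln(D/μ). -/

import Mathlib

/-- For reals `μ ≥ 2`, `D ≥ 2μ`, and the sequence `t 1 = 0`,
`t (j+1) = t j + (D - t j)/μ`: the gaps are `(D/μ)·(1 - 1/μ)^(j-1)`, they are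
strictly decreasing, and the largest index `j* ≥ 2` with `t j* - t (j*-1) ≥ 1`
exists and satisfies `1 + (μ-1)·ln(D/μ) ≤ j* ≤ 2 + μ·ln(D/μ)`. -/
theorem stmt10 (μ D : ℝ) (hμ : 2 ≤ μ) (hD : 2 * μ ≤ D) (t : ℕ → ℝ)
    (h1 : t 1 = 0)
    (hrec : ∀ j : ℕ, 1 ≤ j → t (j + 1) = t j + (D - t j) / μ) :
    (∀ j : ℕ, 1 ≤ j → t (j + 1) - t j = D / μ * (1 - 1 / μ) ^ (j - 1)) ∧
    (∀ j k : ℕ, 1 ≤ j → j < k → t (k + 1) - t k < t (j + 1) - t j) ∧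
    ∃ jstar : ℕ, 2 ≤ jstar ∧ 1 ≤ t jstar - t (jstar - 1) ∧
      (∀ j : ℕ, 2 ≤ j → 1 ≤ t j - t (j - 1) → j ≤ jstar) ∧
      1 + (μ - 1) * Real.log (D / μ) ≤ (jstar : ℝ) ∧
      (jstar : ℝ) ≤ 2 + μ * Real.log (D / μ) := by
  have hμ0 : (0:ℝ) < μ := by linarith
  have hμ1 : (1:ℝ) < μ := by linarith
  have hμne : μ ≠ 0 := ne_of_gt hμ0
  have hμ1ne : μ - 1 ≠ 0 := by intro h; nlinarith
  set r : ℝ := 1 - 1/μ with hrdef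
  have hr0 : 0 < r := by
    have h : 1/μ < 1 := by rw [div_lt_one hμ0]; linarith
    simp only [hrdef]; linarith
  have hr1 : r < 1 := by
    have h : 0 < 1/μ := by positivity
    simp only [hrdef]; linarith
  have hD0 : (0:ℝ) < D := by linarith
  have key : ∀ j : ℕ, 1 ≤ j → D - t j = D * r ^ (j - 1) := by
    intro j hj
    induction j, hj using Nat.le_induction with
    | base => simp [h1]
    | succ n hn ih =>
      rw [hrec n hn]
      have h2 : n - 1 + 1 = n := Nat.sub_add_cancel hn
      have h3 : D - (t n + (D - t n)/μ) = (D - t n) * r := by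
        rw [hrdef]; ring
      rw [h3, ih, show n + 1 - 1 = (n-1)+1 from by omega, pow_succ]; ring
  have gapf : ∀ j : ℕ, 1 ≤ j → t (j + 1) - t j = D / μ * r ^ (j - 1) := by
    intro j hj
    rw [hrec j hj, show t j + (D - t j)/μ - t j = (D - t j)/μ by ring, key j hj]
    ring
  refine ⟨gapf, ?_, ?_⟩
  · intro j k hj hjk
    rw [gapf j hj, gapf k (by omega)]
    have hpow : r ^ (k - 1) < r ^ (j - 1) :=
      pow_lt_pow_right_of_lt_one₀ hr0 hr1 (by omega)
    have : 0 < D / μ := by positivity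
    exact mul_lt_mul_of_pos_left hpow this
  · set L : ℝ := Real.log (D/μ) with hLdef
    set x : ℝ := -Real.log r with hxdef
    have hDμ2 : (2:ℝ) ≤ D/μ := by rw [le_div_iff₀ hμ0]; linarith
    have hL0 : 0 < L := Real.log_pos (by linarith)
    have hlogr : Real.log r < 0 := Real.log_neg hr0 hr1
    have hx0 : 0 < x := by simp [hxdef]; linarith
    have hx_lb : 1/μ ≤ x := by
      have h := Real.log_le_sub_one_of_pos hr0
      have : r - 1 = -(1/μ) := by simp [hrdef]
      rw [this] at h
      simp only [hxdef]; linarith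
    have hx_ub : x ≤ 1/(μ-1) := by
      have hrinv : r⁻¹ = μ/(μ-1) := by
        rw [hrdef]; field_simp
      have h := Real.log_le_sub_one_of_pos (inv_pos.mpr hr0)
      rw [Real.log_inv, hrinv] at h
      have : μ/(μ-1) - 1 = 1/(μ-1) := by field_simp; ring
      rw [this] at h
      simpa [hxdef] using h
    set n : ℕ := ⌊L/x⌋₊ with hndef
    have hn_le : (n:ℝ) ≤ L/x := Nat.floor_le (by positivity)
    have hn_gt : L/x - 1 < (n:ℝ) := Nat.sub_one_lt_floor _
    have hμD : Real.log (μ/D) = -L := by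
      rw [show μ/D = (D/μ)⁻¹ by rw [inv_div], Real.log_inv, hLdef]
    have hgap_ge : ∀ m : ℕ, (m:ℝ) * x ≤ L → 1 ≤ D/μ * r ^ m := by
      intro m hm
      have h1' : μ/D ≤ r ^ m := by
        rw [← Real.exp_log (show (0:ℝ) < μ/D by positivity),
            ← Real.exp_log (show (0:ℝ) < r ^ m by positivity)]
        apply Real.exp_le_exp.mpr
        rw [hμD, Real.log_pow]
        have : (m:ℝ) * Real.log r = -((m:ℝ) * x) := by simp [hxdef]
        rw [this]; linarith
      calc (1:ℝ) = D/μ * (μ/D) := by field_simp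
        _ ≤ D/μ * r ^ m := by
            apply mul_le_mul_of_nonneg_left h1' (by positivity)
    refine ⟨n + 2, by omega, ?_, ?_, ?_, ?_⟩
    · have h := gapf (n + 1) (by omega)
      simp only [Nat.add_sub_cancel] at h
      rw [show n + 2 = (n + 1) + 1 from rfl, show (n + 2) - 1 = n + 1 from rfl, h]
      exact hgap_ge n (by rw [← le_div_iff₀ hx0]; exact hn_le)
    · intro j hj2 hgap
      have h := gapf (j - 1) (by omega)
      rw [show j - 1 + 1 = j from by omega] at h
      rw [h] at hgap
      have hy : μ/D ≤ r ^ (j - 1 - 1) := by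
        calc μ/D = μ/D * 1 := by ring
          _ ≤ μ/D * (D/μ * r ^ (j - 1 - 1)) :=
              mul_le_mul_of_nonneg_left hgap (by positivity)
          _ = r ^ (j - 1 - 1) := by field_simp
      have hlog : Real.log (μ/D) ≤ Real.log (r ^ (j - 1 - 1)) :=
        Real.log_le_log (by positivity) hy
      rw [hμD, Real.log_pow] at hlog
      have hjx : ((j - 1 - 1 : ℕ):ℝ) * x ≤ L := by
        have : ((j - 1 - 1:ℕ):ℝ) * Real.log r = -(((j - 1 - 1:ℕ):ℝ) * x) := by
          simp [hxdef]
        rw [this] at hlog; linarith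
      have : ((j - 1 - 1:ℕ):ℝ) ≤ L/x := by rw [le_div_iff₀ hx0]; exact hjx
      have hle : j - 1 - 1 ≤ n := Nat.le_floor this
      omega
    · push_cast
      have h1' : L * (μ - 1) ≤ L / x := by
        have := div_le_div_of_nonneg_left hL0.le hx0 hx_ub
        calc L * (μ - 1) = L / (1/(μ-1)) := by field_simp
          _ ≤ L / x := this
      nlinarith
    · push_cast
      have h1' : L / x ≤ μ * L := by
        have hμinv : (0:ℝ) < 1/μ := by positivity
        have h2 := div_le_div_of_nonneg_left hL0.le hμinv hx_lb
        have h3 : L / (1/μ) = μ * L := by field_simp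
        linarith
      linarith
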